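/- arXiv:2605.02950 — 5 statements merged into one kernel-verified Lean document; each statement's English description precedes it below -/
import Mathlib

section
/- Fix an integer C ≥ 1, a regressor G ∈ ℝ^C with G ≠ 0, a step size β > 0, a scalar observation v ∈ ℝ, a target parameter vector α ∈ ℝ^C, and a current estimate a ∈ ℝ^C, and let a' := a + β (v − ⟨G,a⟩)/(1 + β‖G‖²) · G denote the NLMS update. Then the squared estimation-error norms satisfy the exact recursion ‖α − a'‖² = ‖α − a‖² − ⟨G, α − a⟩² / ‖G‖² + ⟨G, α − a'⟩² / ‖G‖². -/
open scoped RealInnerProductSpace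

/-- Exact recursion for the squared estimation-error norm under one NLMS update:
`‖α − a'‖² = ‖α − a‖² − ⟨G, α − a⟩²/‖G‖² + ⟨G, α − a'⟩²/‖G‖²`. -/
theorem nlms_error_norm_recursion
    (C : ℕ) (hC : 1 ≤ C)
    (G : EuclideanSpace ℝ (Fin C)) (hG : G ≠ 0)
    (β : ℝ) (hβ : 0 < β) (v : ℝ)
    (α a : EuclideanSpace ℝ (Fin C))
    (a' : EuclideanSpace ℝ (Fin C))
    (ha' : a' = a + (β * (v - ⟪G, a⟫) / (1 + β * ‖G‖ ^ 2)) • G) :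
    ‖α - a'‖ ^ 2
      = ‖α - a‖ ^ 2 - ⟪G, α - a⟫ ^ 2 / ‖G‖ ^ 2 + ⟪G, α - a'⟫ ^ 2 / ‖G‖ ^ 2 := by
  have hG2 : ‖G‖ ^ 2 ≠ 0 := pow_ne_zero _ (norm_ne_zero_iff.mpr hG)
  set c : ℝ := β * (v - ⟪G, a⟫) / (1 + β * ‖G‖ ^ 2) with hc
  have hsub : α - a' = (α - a) - c • G := by
    rw [ha']; abel
  have hnorm : ‖α - a'‖ ^ 2 = ‖α - a‖ ^ 2 - 2 * (c * ⟪G, α - a⟫) + c ^ 2 * ‖G‖ ^ 2 := by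
    rw [hsub, @norm_sub_sq_real, norm_smul, real_inner_smul_right,
      real_inner_comm]
    simp [mul_pow, abs_mul_abs_self, sq_abs]
  have hinner : ⟪G, α - a'⟫ = ⟪G, α - a⟫ - c * ‖G‖ ^ 2 := by
    rw [hsub, inner_sub_right, real_inner_smul_right, real_inner_self_eq_norm_sq]
  rw [hnorm, hinner]
  field_simp
  ring
end

section
/- Fix an integer C ≥ 1, a regressor G ∈ ℝ^C, a step size β > 0, a target parameter vector α ∈ ℝ^C, a disturbance D ∈ ℝ, a scalar observation v := ⟨G, α⟩ + D, a current estimate a ∈ ℝ^C, and let a' := a + β (v − ⟨G,a⟩)/(1 + β‖G‖²) · G denote the NLMS update. If the update leaves the squared estimation-error norm unchanged, i.e. ‖α − a'‖² = ‖α − a‖², then either ⟨G, α − a⟩ + D = 0, or the prediction error satisfies the steady-state relation ⟨G, α − a⟩ = (β‖G‖² / (2 + β‖G‖²)) · D. -/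
open scoped RealInnerProductSpace

/-- Steady-state form of the NLMS prediction error: if one NLMS update with
observation `v = ⟨G, α⟩ + D` leaves the squared estimation-error norm unchanged,
then either `⟨G, α − a⟩ + D = 0` or
`⟨G, α − a⟩ = (β‖G‖²/(2 + β‖G‖²)) · D`. -/
theorem nlms_steady_state_prediction_error
    (C : ℕ) (hC : 1 ≤ C)
    (G : EuclideanSpace ℝ (Fin C))
    (β : ℝ) (hβ : 0 < β)
    (α : EuclideanSpace ℝ (Fin C)) (D : ℝ)
    (v : ℝ) (hv : v = ⟪G, α⟫ + D)
    (a : EuclideanSpace ℝ (Fin C))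
    (a' : EuclideanSpace ℝ (Fin C))
    (ha' : a' = a + (β * (v - ⟪G, a⟫) / (1 + β * ‖G‖ ^ 2)) • G)
    (hsteady : ‖α - a'‖ ^ 2 = ‖α - a‖ ^ 2) :
    ⟪G, α - a⟫ + D = 0 ∨
      ⟪G, α - a⟫ = (β * ‖G‖ ^ 2 / (2 + β * ‖G‖ ^ 2)) * D := by
  set p : ℝ := ⟪G, α - a⟫ with hp
  have hpinner : ⟪G, α⟫ - ⟪G, a⟫ = p := by
    rw [hp, inner_sub_right]
  have hd : (0:ℝ) < 1 + β * ‖G‖ ^ 2 := by positivity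
  set c : ℝ := β * (v - ⟪G, a⟫) / (1 + β * ‖G‖ ^ 2) with hc
  have hcval : c = β * (p + D) / (1 + β * ‖G‖ ^ 2) := by
    rw [hc, hv]; ring_nf; rw [← hpinner]; ring
  have hdiff : α - a' = (α - a) - c • G := by
    rw [ha']; abel
  have hexp : ‖(α - a) - c • G‖ ^ 2
      = ‖α - a‖ ^ 2 - 2 * (c * p) + c ^ 2 * ‖G‖ ^ 2 := by
    rw [norm_sub_sq_real, real_inner_smul_right, norm_smul, real_inner_comm]
    simp [← hp, mul_pow, abs_mul_abs_self, sq_abs]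
  rw [hdiff, hexp] at hsteady
  have key : c * (c * ‖G‖ ^ 2 - 2 * p) = 0 := by nlinarith [hsteady]
  rcases mul_eq_zero.mp key with h0 | h1
  · left
    rw [hcval] at h0
    have : β * (p + D) = 0 := by
      field_simp at h0
      linarith [h0]
    have := mul_eq_zero.mp this
    rcases this with h | h
    · exact absurd h (ne_of_gt hβ)
    · linarith
  · right
    -- c * ‖G‖² = 2p
    have h2 : β * (p + D) * ‖G‖ ^ 2 = 2 * p * (1 + β * ‖G‖ ^ 2) := by
      have := sub_eq_zero.mp h1
      rw [hcval] at this
      field_simp at this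
      linarith [this]
    have hd2 : (0:ℝ) < 2 + β * ‖G‖ ^ 2 := by positivity
    rw [div_mul_eq_mul_div, eq_div_iff (ne_of_gt hd2)]
    nlinarith [h2]
end

section
/- Fix integers C ≥ 1 and p ≥ 1, a step size β > 0, and a balancing parameter ρ > 0. Let G ∈ ℝ^C be a probability vector, i.e. every entry of G lies in [0,1] and the entries of G sum to 1, and set κ := β‖G‖² / (2 + β‖G‖²). Let Δ ∈ ℝ^C, let w^1, …, w^C ∈ ℝ^p, let ξ ∈ ℝ^p, and let e ∈ ℝ^p be the vector whose j-th coordinate is e_j = (1+κ) Σ_{c=1}^C Δ_c (w^c)_j + κ ξ_j. Then ‖e‖² ≤ (1+ρ) (1 + β/(2+β))² (Σ_{c=1}^C ‖w^c‖²) ‖Δ‖² + (1+ρ⁻¹) (β/(2+β))² ‖ξ‖². -/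
/-- Pointwise core of the encoding-error proposition: with `G` a probability
vector, `κ := β‖G‖²/(2 + β‖G‖²)`, and `e` the vector with coordinates
`e_j = (1+κ) Σ_c Δ_c (w^c)_j + κ ξ_j`, one has
`‖e‖² ≤ (1+ρ)(1 + β/(2+β))²(Σ_c ‖w^c‖²)‖Δ‖² + (1+ρ⁻¹)(β/(2+β))²‖ξ‖²`. -/
theorem encoding_error_pointwise_bound
    (C p : ℕ) (hC : 1 ≤ C) (hp : 1 ≤ p)
    (β : ℝ) (hβ : 0 < β)
    (ρ : ℝ) (hρ : 0 < ρ)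
    (G : EuclideanSpace ℝ (Fin C))
    (hG01 : ∀ i, G i ∈ Set.Icc (0 : ℝ) 1)
    (hGsum : ∑ i, G i = 1)
    (κ : ℝ) (hκ : κ = β * ‖G‖ ^ 2 / (2 + β * ‖G‖ ^ 2))
    (Δ : EuclideanSpace ℝ (Fin C))
    (w : Fin C → EuclideanSpace ℝ (Fin p))
    (ξ : EuclideanSpace ℝ (Fin p))
    (e : EuclideanSpace ℝ (Fin p))
    (he : ∀ j, e j = (1 + κ) * (∑ c, Δ c * w c j) + κ * ξ j) :
    ‖e‖ ^ 2
      ≤ (1 + ρ) * (1 + β / (2 + β)) ^ 2 * (∑ c, ‖w c‖ ^ 2) * ‖Δ‖ ^ 2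
        + (1 + ρ⁻¹) * (β / (2 + β)) ^ 2 * ‖ξ‖ ^ 2 := by
  have hnorm : ∀ {n : ℕ} (x : EuclideanSpace ℝ (Fin n)), ‖x‖ ^ 2 = ∑ i, x i ^ 2 := by
    intro n x
    rw [EuclideanSpace.norm_eq, Real.sq_sqrt (by positivity)]
    simp [sq_abs]
  have hG2 : ‖G‖ ^ 2 ≤ 1 := by
    rw [hnorm G]
    calc ∑ i, G i ^ 2 ≤ ∑ i, G i := by
          apply Finset.sum_le_sum
          intro i _
          have h := hG01 i
          nlinarith [h.1, h.2]
      _ = 1 := hGsum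
  have hG0 : (0:ℝ) ≤ ‖G‖ ^ 2 := sq_nonneg _
  have hden : (0:ℝ) < 2 + β * ‖G‖ ^ 2 := by nlinarith
  have hκ0 : 0 ≤ κ := by rw [hκ]; positivity
  have hκle : κ ≤ β / (2 + β) := by
    rw [hκ, div_le_div_iff₀ hden (by linarith)]
    nlinarith
  set K : ℝ := β / (2 + β) with hK
  have hK0 : 0 ≤ K := by positivity
  have young : ∀ x y : ℝ, (x + y) ^ 2 ≤ (1 + ρ) * x ^ 2 + (1 + ρ⁻¹) * y ^ 2 := by
    intro x y
    have hρi : ρ * ρ⁻¹ = 1 := mul_inv_cancel₀ hρ.ne'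
    nlinarith [sq_nonneg (ρ * x - y), mul_pos hρ hρ]
  set S : Fin p → ℝ := fun j => ∑ c, Δ c * w c j with hS
  have hCS : ∀ j, S j ^ 2 ≤ (∑ c, Δ c ^ 2) * (∑ c, w c j ^ 2) :=
    fun j => Finset.sum_mul_sq_le_sq_mul_sq Finset.univ Δ (fun c => w c j)
  -- sum of S j ^ 2 bound
  have hSsum : ∑ j, S j ^ 2 ≤ (∑ c, ‖w c‖ ^ 2) * ‖Δ‖ ^ 2 := by
    calc ∑ j, S j ^ 2 ≤ ∑ j, (∑ c, Δ c ^ 2) * (∑ c, w c j ^ 2) :=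
          Finset.sum_le_sum fun j _ => hCS j
      _ = (∑ c, ‖w c‖ ^ 2) * ‖Δ‖ ^ 2 := by
          rw [← Finset.mul_sum, Finset.sum_comm, hnorm Δ]
          rw [show (∑ c, ‖w c‖ ^ 2) = ∑ c, ∑ j, (w c j) ^ 2 from
            Finset.sum_congr rfl fun c _ => hnorm (w c)]
          ring
  -- main estimate
  have key : ‖e‖ ^ 2 ≤ (1 + ρ) * (1 + κ) ^ 2 * (∑ j, S j ^ 2)
      + (1 + ρ⁻¹) * κ ^ 2 * (∑ j, ξ j ^ 2) := by
    rw [hnorm e]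
    calc ∑ j, e j ^ 2 ≤ ∑ j, ((1 + ρ) * ((1 + κ) * S j) ^ 2 + (1 + ρ⁻¹) * (κ * ξ j) ^ 2) := by
          apply Finset.sum_le_sum
          intro j _
          rw [he j]
          exact young _ _
      _ = (1 + ρ) * (1 + κ) ^ 2 * (∑ j, S j ^ 2) + (1 + ρ⁻¹) * κ ^ 2 * (∑ j, ξ j ^ 2) := by
          rw [Finset.sum_add_distrib, ← Finset.mul_sum, ← Finset.mul_sum]
          congr 1
          · rw [Finset.mul_sum, Finset.mul_sum]; apply Finset.sum_congr rfl; intros; ring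
          · rw [Finset.mul_sum, Finset.mul_sum]; apply Finset.sum_congr rfl; intros; ring
  have hρ1 : (0:ℝ) ≤ 1 + ρ := by linarith
  have hρi0 : (0:ℝ) ≤ 1 + ρ⁻¹ := by positivity
  have hSnn : (0:ℝ) ≤ ∑ j, S j ^ 2 := Finset.sum_nonneg fun j _ => sq_nonneg _
  have hξ : ∑ j, ξ j ^ 2 = ‖ξ‖ ^ 2 := (hnorm ξ).symm
  have h1 : (1 + ρ) * (1 + κ) ^ 2 * (∑ j, S j ^ 2)
      ≤ (1 + ρ) * (1 + K) ^ 2 * ((∑ c, ‖w c‖ ^ 2) * ‖Δ‖ ^ 2) := by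
    apply mul_le_mul
    · apply mul_le_mul_of_nonneg_left _ hρ1
      exact pow_le_pow_left₀ (by linarith) (by linarith) 2
    · exact hSsum
    · exact hSnn
    · positivity
  have h2 : (1 + ρ⁻¹) * κ ^ 2 * (∑ j, ξ j ^ 2) ≤ (1 + ρ⁻¹) * K ^ 2 * ‖ξ‖ ^ 2 := by
    rw [hξ]
    apply mul_le_mul_of_nonneg_right _ (sq_nonneg _)
    apply mul_le_mul_of_nonneg_left _ hρi0
    exact pow_le_pow_left₀ hκ0 hκle 2
  calc ‖e‖ ^ 2 ≤ _ := key
    _ ≤ (1 + ρ) * (1 + K) ^ 2 * ((∑ c, ‖w c‖ ^ 2) * ‖Δ‖ ^ 2) + (1 + ρ⁻¹) * K ^ 2 * ‖ξ‖ ^ 2 :=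
        add_le_add h1 h2
    _ = (1 + ρ) * (1 + K) ^ 2 * (∑ c, ‖w c‖ ^ 2) * ‖Δ‖ ^ 2 + (1 + ρ⁻¹) * K ^ 2 * ‖ξ‖ ^ 2 := by
        ring
end

section
/- Let (Ω, F, μ) be a probability space, let x : Ω → ℝⁿ and y : Ω → {1, …, C} be measurable, and let P_c := μ[1_{y=c} | σ(x)] denote the conditional probability of the cluster-c label given σ(x). Fix integers C ≥ 1 and p ≥ 1, a step size β > 0, and a balancing parameter ρ > 0. Let Φ_1, …, Φ_C : ℝⁿ → [0,1] be measurable, let w^1, …, w^C ∈ ℝ^p be prototype vectors, let ξ : Ω → ℝ^p be measurable with ∫ ‖ξ‖² dμ < ∞, and let G : Ω → ℝ^C be measurable such that for μ-almost every ω, G(ω) is a probability vector (entries in [0,1] summing to 1); set κ(ω) := β‖G(ω)‖² / (2 + β‖G(ω)‖²). Suppose the encoding error e : Ω → ℝ^p satisfies, for μ-almost every ω and every coordinate j, e_j(ω) = (1 + κ(ω)) Σ_{c=1}^C (P_c(ω) − Φ_c(x(ω))) (w^c)_j + κ(ω) ξ_j(ω). Then ∫ ‖e‖² dμ ≤ (1+ρ)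 (1 + β/(2+β))² (Σ_{c=1}^C ‖w^c‖²) Σ_{c=1}^C ∫ |Φ_c(x(ω)) − P_c(ω)|² dμ(ω) + (1+ρ⁻¹) (β/(2+β))² ∫ ‖ξ‖² dμ. -/
open MeasureTheory

/-- Encoding-error proposition: if the encoding error `e` satisfies, almost
everywhere and in every coordinate `j`,
`e_j = (1+κ) Σ_c (P_c − Φ_c∘x)(w^c)_j + κ ξ_j` with
`κ = β‖G‖²/(2 + β‖G‖²)` and `G` almost surely a probability vector, then
`∫ ‖e‖² ≤ (1+ρ)(1 + β/(2+β))²(Σ_c ‖w^c‖²) Σ_c ∫ |Φ_c∘x − P_c|²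
  + (1+ρ⁻¹)(β/(2+β))² ∫ ‖ξ‖²`. -/
theorem encoding_error_integral_bound
    {Ω : Type*} [MeasurableSpace Ω] (μ : Measure Ω) [IsProbabilityMeasure μ]
    (n C p : ℕ) (hC : 1 ≤ C) (hp : 1 ≤ p)
    (x : Ω → EuclideanSpace ℝ (Fin n)) (hx : Measurable x)
    (y : Ω → Fin C) (hy : Measurable y)
    (P : Fin C → Ω → ℝ)
    (hP : ∀ c, P c = μ[(fun ω => if y ω = c then (1 : ℝ) else 0) |
      MeasurableSpace.comap x inferInstance])
    (β : ℝ) (hβ : 0 < β) (ρ : ℝ) (hρ : 0 < ρ)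
    (Φ : Fin C → EuclideanSpace ℝ (Fin n) → ℝ)
    (hΦmeas : ∀ c, Measurable (Φ c))
    (hΦ01 : ∀ c t, Φ c t ∈ Set.Icc (0 : ℝ) 1)
    (w : Fin C → EuclideanSpace ℝ (Fin p))
    (ξ : Ω → EuclideanSpace ℝ (Fin p)) (hξ : Measurable ξ)
    (hξ2 : Integrable (fun ω => ‖ξ ω‖ ^ 2) μ)
    (G : Ω → EuclideanSpace ℝ (Fin C)) (hG : Measurable G)
    (hGprob : ∀ᵐ ω ∂μ, (∀ i, G ω i ∈ Set.Icc (0 : ℝ) 1) ∧ ∑ i, G ω i = 1)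
    (κ : Ω → ℝ) (hκ : κ = fun ω => β * ‖G ω‖ ^ 2 / (2 + β * ‖G ω‖ ^ 2))
    (e : Ω → EuclideanSpace ℝ (Fin p))
    (he : ∀ᵐ ω ∂μ, ∀ j, e ω j
      = (1 + κ ω) * (∑ c, (P c ω - Φ c (x ω)) * w c j) + κ ω * ξ ω j) :
    ∫ ω, ‖e ω‖ ^ 2 ∂μ
      ≤ (1 + ρ) * (1 + β / (2 + β)) ^ 2 * (∑ c, ‖w c‖ ^ 2) *
          (∑ c, ∫ ω, |Φ c (x ω) - P c ω| ^ 2 ∂μ)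
        + (1 + ρ⁻¹) * (β / (2 + β)) ^ 2 * ∫ ω, ‖ξ ω‖ ^ 2 ∂μ := by
  have hm : MeasurableSpace.comap x inferInstance ≤ ‹MeasurableSpace Ω› := hx.comap_le
  have hβ2 : (0:ℝ) < 2 + β := by linarith
  set k : ℝ := β / (2 + β) with hk
  have hk0 : 0 ≤ k := by positivity
  set K : ℝ := 1 + k with hK
  have hK0 : 0 ≤ K := by positivity
  -- indicator integrability
  have hindmeas : ∀ c : Fin C, Measurable (fun ω => if y ω = c then (1:ℝ) else 0) := by
    intro c
    exact Measurable.ite (hy (measurableSet_singleton c)) measurable_const measurable_const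
  have hind : ∀ c : Fin C, Integrable (fun ω => if y ω = c then (1:ℝ) else 0) μ := by
    intro c
    refine (integrable_const (1:ℝ)).mono' (hindmeas c).aestronglyMeasurable ?_
    filter_upwards with ω
    split <;> simp
  -- P is a.e.-strongly measurable and bounded
  have hPm : ∀ c, Measurable (P c) := by
    intro c
    rw [hP c]
    exact (stronglyMeasurable_condExp.mono hm).measurable
  have hPsm : ∀ c, AEStronglyMeasurable (P c) μ := fun c => (hPm c).aestronglyMeasurable
  have hPbd : ∀ c, ∀ᵐ ω ∂μ, 0 ≤ P c ω ∧ P c ω ≤ 1 := by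
    intro c
    rw [hP c]
    have h0 : 0 ≤ᵐ[μ] μ[(fun ω => if y ω = c then (1:ℝ) else 0) |
        MeasurableSpace.comap x inferInstance] := by
      refine condExp_nonneg ?_
      filter_upwards with ω
      split <;> norm_num
    have h1 : μ[(fun ω => if y ω = c then (1:ℝ) else 0) |
        MeasurableSpace.comap x inferInstance] ≤ᵐ[μ] fun _ => (1:ℝ) := by
      have := condExp_mono (m := MeasurableSpace.comap x inferInstance)
        (hind c) (integrable_const (1:ℝ))
        (by filter_upwards with ω; split <;> norm_num)
      rwa [condExp_const hm (1:ℝ)] at this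
    filter_upwards [h0, h1] with ω hω0 hω1
    exact ⟨hω0, hω1⟩
  -- integrability of the squared posterior mismatch
  have hPhiInt : ∀ c, Integrable (fun ω => |Φ c (x ω) - P c ω| ^ 2) μ := by
    intro c
    have hmeas : AEStronglyMeasurable (fun ω => |Φ c (x ω) - P c ω| ^ 2) μ := by
      have heq : (fun ω => |Φ c (x ω) - P c ω| ^ 2)
          = fun ω => (Φ c (x ω) - P c ω) ^ 2 := by
        funext ω; rw [sq_abs]
      rw [heq]
      exact ((((hΦmeas c).comp hx).sub (hPm c)).pow measurable_const).aestronglyMeasurable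
    refine (integrable_const (1:ℝ)).mono' hmeas ?_
    filter_upwards [hPbd c] with ω hω
    obtain ⟨hΦ0, hΦ1⟩ := hΦ01 c (x ω)
    have habs : |Φ c (x ω) - P c ω| ≤ 1 := by
      rw [abs_le]; constructor <;> [linarith [hω.2]; linarith [hω.1]]
    have h0 : (0:ℝ) ≤ |Φ c (x ω) - P c ω| := abs_nonneg _
    have : |Φ c (x ω) - P c ω| ^ 2 ≤ 1 := by nlinarith
    rw [Real.norm_eq_abs, abs_of_nonneg (sq_nonneg _)]
    exact this
  -- κ bounds
  have hκm : Measurable κ := by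
    rw [hκ]
    exact (measurable_const.mul (hG.norm.pow measurable_const)).div
      (measurable_const.add (measurable_const.mul (hG.norm.pow measurable_const)))
  have hκb : ∀ᵐ ω ∂μ, 0 ≤ κ ω ∧ κ ω ≤ k := by
    filter_upwards [hGprob] with ω hω
    obtain ⟨h01, hsum⟩ := hω
    have hnsq : ‖G ω‖ ^ 2 = ∑ i, (G ω i) ^ 2 := by
      rw [EuclideanSpace.norm_eq, Real.sq_sqrt (by positivity)]
      simp [Real.norm_eq_abs, sq_abs]
    have ht0 : 0 ≤ ‖G ω‖ ^ 2 := sq_nonneg _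
    have ht1 : ‖G ω‖ ^ 2 ≤ 1 := by
      rw [hnsq, ← hsum]
      refine Finset.sum_le_sum fun i _ => ?_
      obtain ⟨hi0, hi1⟩ := h01 i
      nlinarith
    have hd : (0:ℝ) < 2 + β * ‖G ω‖ ^ 2 := by nlinarith
    constructor
    · rw [hκ]; positivity
    · rw [hκ, hk]
      simp only
      rw [div_le_div_iff₀ hd hβ2]
      nlinarith [mul_le_mul_of_nonneg_left ht1 hβ.le, mul_nonneg hβ.le ht0]
  -- the measurable representative of e
  set v : Ω → EuclideanSpace ℝ (Fin p) :=
    fun ω => ∑ c, (P c ω - Φ c (x ω)) • w c with hv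
  set F : Ω → EuclideanSpace ℝ (Fin p) :=
    fun ω => (1 + κ ω) • v ω + κ ω • ξ ω with hF
  have hvm : Measurable v := by
    refine Finset.measurable_sum _ fun c _ => ?_
    exact ((hPm c).sub ((hΦmeas c).comp hx)).smul_const (w c)
  have hFm : AEStronglyMeasurable F μ :=
    (((hκm.const_add 1).smul hvm).add (hκm.smul hξ)).aestronglyMeasurable
  have heF : ∀ᵐ ω ∂μ, e ω = F ω := by
    filter_upwards [he] with ω hω
    ext j
    rw [hω j, hF]
    simp only [PiLp.add_apply, PiLp.smul_apply, smul_eq_mul, hv]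
    congr 1
    congr 1
    rw [WithLp.ofLp_sum, Finset.sum_apply]
    simp [PiLp.smul_apply, smul_eq_mul]
  -- pointwise quadratic bound
  set S : Ω → ℝ := fun ω => ∑ c, |Φ c (x ω) - P c ω| ^ 2 with hS
  set W : ℝ := ∑ c, ‖w c‖ ^ 2 with hW
  have hW0 : 0 ≤ W := Finset.sum_nonneg fun c _ => sq_nonneg _
  have hS0 : ∀ ω, 0 ≤ S ω := fun ω => Finset.sum_nonneg fun c _ => sq_nonneg _
  have young : ∀ s t : ℝ, (s + t) ^ 2 ≤ (1 + ρ) * s ^ 2 + (1 + ρ⁻¹) * t ^ 2 := by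
    intro s t
    have hinv : ρ * ρ⁻¹ = 1 := mul_inv_cancel₀ (ne_of_gt hρ)
    nlinarith [sq_nonneg (ρ * s - t), hρ, sq_nonneg (s - t), sq_nonneg (s + t)]
  have hvb : ∀ ω, ‖v ω‖ ^ 2 ≤ W * S ω := by
    intro ω
    have h1 : ‖v ω‖ ≤ ∑ c, |Φ c (x ω) - P c ω| * ‖w c‖ := by
      refine (norm_sum_le _ _).trans_eq ?_
      refine Finset.sum_congr rfl fun c _ => ?_
      rw [norm_smul, Real.norm_eq_abs, abs_sub_comm]
    have h2 : (∑ c, |Φ c (x ω) - P c ω| * ‖w c‖) ^ 2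
        ≤ (∑ c, |Φ c (x ω) - P c ω| ^ 2) * ∑ c, ‖w c‖ ^ 2 :=
      Finset.sum_mul_sq_le_sq_mul_sq _ _ _
    have h3 : 0 ≤ ∑ c, |Φ c (x ω) - P c ω| * ‖w c‖ :=
      Finset.sum_nonneg fun c _ => mul_nonneg (abs_nonneg _) (norm_nonneg _)
    calc ‖v ω‖ ^ 2 ≤ (∑ c, |Φ c (x ω) - P c ω| * ‖w c‖) ^ 2 :=
          pow_le_pow_left₀ (norm_nonneg _) h1 2
      _ ≤ (∑ c, |Φ c (x ω) - P c ω| ^ 2) * ∑ c, ‖w c‖ ^ 2 := h2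
      _ = W * S ω := by rw [hS, hW]; ring
  have hFb : ∀ᵐ ω ∂μ, ‖F ω‖ ^ 2
      ≤ (1 + ρ) * K ^ 2 * W * S ω + (1 + ρ⁻¹) * k ^ 2 * ‖ξ ω‖ ^ 2 := by
    filter_upwards [hκb] with ω hκω
    obtain ⟨hκ0, hκ1⟩ := hκω
    have hnF : ‖F ω‖ ≤ (1 + κ ω) * ‖v ω‖ + κ ω * ‖ξ ω‖ := by
      refine (norm_add_le _ _).trans ?_
      rw [norm_smul, norm_smul, Real.norm_eq_abs, Real.norm_eq_abs,
        abs_of_nonneg (by linarith), abs_of_nonneg hκ0]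
    have h0s : 0 ≤ (1 + κ ω) * ‖v ω‖ := mul_nonneg (by linarith) (norm_nonneg _)
    have h0t : 0 ≤ κ ω * ‖ξ ω‖ := mul_nonneg hκ0 (norm_nonneg _)
    have hs2 : ((1 + κ ω) * ‖v ω‖) ^ 2 ≤ K ^ 2 * (W * S ω) := by
      rw [mul_pow]
      refine mul_le_mul ?_ (hvb ω) (sq_nonneg _) (sq_nonneg _)
      exact pow_le_pow_left₀ (by linarith) (by rw [hK]; linarith) 2
    have ht2 : (κ ω * ‖ξ ω‖) ^ 2 ≤ k ^ 2 * ‖ξ ω‖ ^ 2 := by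
      rw [mul_pow]
      exact mul_le_mul_of_nonneg_right (pow_le_pow_left₀ hκ0 hκ1 2) (sq_nonneg _)
    calc ‖F ω‖ ^ 2 ≤ ((1 + κ ω) * ‖v ω‖ + κ ω * ‖ξ ω‖) ^ 2 :=
          pow_le_pow_left₀ (norm_nonneg _) hnF 2
      _ ≤ (1 + ρ) * ((1 + κ ω) * ‖v ω‖) ^ 2 + (1 + ρ⁻¹) * (κ ω * ‖ξ ω‖) ^ 2 := young _ _
      _ ≤ (1 + ρ) * (K ^ 2 * (W * S ω)) + (1 + ρ⁻¹) * (k ^ 2 * ‖ξ ω‖ ^ 2) := by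
          have h1 : (0:ℝ) ≤ 1 + ρ := by linarith
          have h2 : (0:ℝ) ≤ 1 + ρ⁻¹ := by positivity
          exact add_le_add (mul_le_mul_of_nonneg_left hs2 h1)
            (mul_le_mul_of_nonneg_left ht2 h2)
      _ = (1 + ρ) * K ^ 2 * W * S ω + (1 + ρ⁻¹) * k ^ 2 * ‖ξ ω‖ ^ 2 := by ring
  -- the dominating integrable function
  have hSint : Integrable S μ := by
    rw [hS]
    exact integrable_finset_sum _ fun c _ => hPhiInt c
  set g : Ω → ℝ :=
    fun ω => (1 + ρ) * K ^ 2 * W * S ω + (1 + ρ⁻¹) * k ^ 2 * ‖ξ ω‖ ^ 2 with hg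
  have hgint : Integrable g μ :=
    (hSint.const_mul _).add (hξ2.const_mul _)
  have heFsq : (fun ω => ‖e ω‖ ^ 2) =ᵐ[μ] fun ω => ‖F ω‖ ^ 2 := by
    filter_upwards [heF] with ω hω
    rw [hω]
  have heb : ∀ᵐ ω ∂μ, ‖e ω‖ ^ 2 ≤ g ω := by
    filter_upwards [heFsq, hFb] with ω h1 h2
    rw [h1]; exact h2
  have heint : Integrable (fun ω => ‖e ω‖ ^ 2) μ := by
    refine hgint.mono' ((hFm.norm.pow 2).congr heFsq.symm) ?_
    filter_upwards [heb] with ω hω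
    simpa [abs_of_nonneg (sq_nonneg ‖e ω‖)] using hω
  have hmain : ∫ ω, ‖e ω‖ ^ 2 ∂μ ≤ ∫ ω, g ω ∂μ :=
    integral_mono_ae heint hgint heb
  have hgval : ∫ ω, g ω ∂μ
      = (1 + ρ) * K ^ 2 * W * (∑ c, ∫ ω, |Φ c (x ω) - P c ω| ^ 2 ∂μ)
        + (1 + ρ⁻¹) * k ^ 2 * ∫ ω, ‖ξ ω‖ ^ 2 ∂μ := by
    rw [hg]
    rw [integral_add (hSint.const_mul _) (hξ2.const_mul _),
      integral_const_mul, integral_const_mul]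
    congr 1
    rw [hS, integral_finset_sum _ fun c _ => hPhiInt c]
  rw [hgval] at hmain
  calc ∫ ω, ‖e ω‖ ^ 2 ∂μ
      ≤ (1 + ρ) * K ^ 2 * W * (∑ c, ∫ ω, |Φ c (x ω) - P c ω| ^ 2 ∂μ)
        + (1 + ρ⁻¹) * k ^ 2 * ∫ ω, ‖ξ ω‖ ^ 2 ∂μ := hmain
    _ = (1 + ρ) * (1 + β / (2 + β)) ^ 2 * (∑ c, ‖w c‖ ^ 2) *
          (∑ c, ∫ ω, |Φ c (x ω) - P c ω| ^ 2 ∂μ)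
        + (1 + ρ⁻¹) * (β / (2 + β)) ^ 2 * ∫ ω, ‖ξ ω‖ ^ 2 ∂μ := by
      rw [hK, hk, hW]
end

section
/- Let (Ω, F, μ) be a probability space, let x : Ω → ℝⁿ and y : Ω → {1, …, C} be measurable, and let P_c := μ[1_{y=c} | σ(x)] denote the conditional probability of the cluster-c label given σ(x). Fix integers C ≥ 1 and p ≥ 1, a step size β > 0, and balancing parameters ρ > 0 and η > 0. Let Φ_1, …, Φ_C : ℝⁿ → [0,1] be measurable, let w^1, …, w^C ∈ ℝ^p be prototype vectors, let ξ : Ω → ℝ^p be measurable with ∫ ‖ξ‖² dμ < ∞, and let G : Ω → ℝ^C be measurable such that for μ-almost every ω, G(ω) is a probability vector (entries in [0,1] summing to 1); set κ(ω) := β‖G(ω)‖² / (2 + β‖G(ω)‖²). Suppose the encoding error e : Ω → ℝ^p satisfies, for μ-almost every ω and every coordinate j, e_j(ω) = (1 + κ(ω)) Σ_{c=1}^C (P_c(ω) − Φ_c(x(ω))) (w^c)_j + κ(ω) ξ_j(ω), and suppose that for every c there are constants A_c ≥ 0 and E_c ≥ 0 such that ∫ |Φ_c(x(ω)) − P_c(ω)|²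 dμ(ω) ≤ (1+η) A_c + (1+η⁻¹) E_c. Then ∫ ‖e‖² dμ ≤ (1+ρ)(1+η) (1 + β/(2+β))² (Σ_{c=1}^C ‖w^c‖²) (Σ_{c=1}^C A_c) + (1+ρ)(1+η⁻¹) (1 + β/(2+β))² (Σ_{c=1}^C ‖w^c‖²) (Σ_{c=1}^C E_c) + (1+ρ⁻¹) (β/(2+β))² ∫ ‖ξ‖² dμ. -/
open MeasureTheory

lemma young_sq (ρ a b : ℝ) (hρ : 0 < ρ) :
    (a + b) ^ 2 ≤ (1 + ρ) * a ^ 2 + (1 + ρ⁻¹) * b ^ 2 := by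
  have h1 : ρ * ρ⁻¹ = 1 := mul_inv_cancel₀ hρ.ne'
  have h2 : 0 ≤ ρ⁻¹ * (ρ * a - b) ^ 2 :=
    mul_nonneg (inv_nonneg.2 hρ.le) (sq_nonneg _)
  nlinarith [sq_nonneg (ρ * a - b)]

lemma euclid_sq_norm {p : ℕ} (v : EuclideanSpace ℝ (Fin p)) :
    ‖v‖ ^ 2 = ∑ j, (v j) ^ 2 := by
  rw [EuclideanSpace.norm_eq, Real.sq_sqrt (by positivity)]
  simp [Real.norm_eq_abs, sq_abs]

set_option maxHeartbeats 1000000 in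
/-- Deterministic conditional form of the encoding-error-bound theorem: under
the steady-state NLMS error representation for `e` and the per-cluster
posterior-approximation bounds `∫ |Φ_c∘x − P_c|² ≤ (1+η)A_c + (1+η⁻¹)E_c`, the
total encoding error decomposes as
`∫ ‖e‖² ≤ (1+ρ)(1+η)(1 + β/(2+β))²(Σ_c ‖w^c‖²)(Σ_c A_c)
  + (1+ρ)(1+η⁻¹)(1 + β/(2+β))²(Σ_c ‖w^c‖²)(Σ_c E_c)
  + (1+ρ⁻¹)(β/(2+β))² ∫ ‖ξ‖²`. -/
theorem encoding_error_bound_decomposition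
    {Ω : Type*} [MeasurableSpace Ω] (μ : Measure Ω) [IsProbabilityMeasure μ]
    (n C p : ℕ) (hC : 1 ≤ C) (hp : 1 ≤ p)
    (x : Ω → EuclideanSpace ℝ (Fin n)) (hx : Measurable x)
    (y : Ω → Fin C) (hy : Measurable y)
    (P : Fin C → Ω → ℝ)
    (hP : ∀ c, P c = μ[(fun ω => if y ω = c then (1 : ℝ) else 0) |
      MeasurableSpace.comap x inferInstance])
    (β : ℝ) (hβ : 0 < β) (ρ : ℝ) (hρ : 0 < ρ) (η : ℝ) (hη : 0 < η)
    (Φ : Fin C → EuclideanSpace ℝ (Fin n) → ℝ)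
    (hΦmeas : ∀ c, Measurable (Φ c))
    (hΦ01 : ∀ c t, Φ c t ∈ Set.Icc (0 : ℝ) 1)
    (w : Fin C → EuclideanSpace ℝ (Fin p))
    (ξ : Ω → EuclideanSpace ℝ (Fin p)) (hξ : Measurable ξ)
    (hξ2 : Integrable (fun ω => ‖ξ ω‖ ^ 2) μ)
    (G : Ω → EuclideanSpace ℝ (Fin C)) (hG : Measurable G)
    (hGprob : ∀ᵐ ω ∂μ, (∀ i, G ω i ∈ Set.Icc (0 : ℝ) 1) ∧ ∑ i, G ω i = 1)
    (κ : Ω → ℝ) (hκ : κ = fun ω => β * ‖G ω‖ ^ 2 / (2 + β * ‖G ω‖ ^ 2))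
    (e : Ω → EuclideanSpace ℝ (Fin p))
    (he : ∀ᵐ ω ∂μ, ∀ j, e ω j
      = (1 + κ ω) * (∑ c, (P c ω - Φ c (x ω)) * w c j) + κ ω * ξ ω j)
    (A E : Fin C → ℝ) (hA : ∀ c, 0 ≤ A c) (hE : ∀ c, 0 ≤ E c)
    (happrox : ∀ c, ∫ ω, |Φ c (x ω) - P c ω| ^ 2 ∂μ
      ≤ (1 + η) * A c + (1 + η⁻¹) * E c) :
    ∫ ω, ‖e ω‖ ^ 2 ∂μ
      ≤ (1 + ρ) * (1 + η) * (1 + β / (2 + β)) ^ 2 * (∑ c, ‖w c‖ ^ 2) * (∑ c, A c)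
        + (1 + ρ) * (1 + η⁻¹) * (1 + β / (2 + β)) ^ 2 * (∑ c, ‖w c‖ ^ 2) * (∑ c, E c)
        + (1 + ρ⁻¹) * (β / (2 + β)) ^ 2 * ∫ ω, ‖ξ ω‖ ^ 2 ∂μ := by
  have h2β : (0 : ℝ) < 2 + β := by linarith
  set K : ℝ := β / (2 + β) with hK
  have hK0 : 0 ≤ K := div_nonneg hβ.le h2β.le
  have hWnn : 0 ≤ ∑ c, ‖w c‖ ^ 2 := Finset.sum_nonneg fun c _ => sq_nonneg _
  -- κ bounds
  have hκb : ∀ᵐ ω ∂μ, 0 ≤ κ ω ∧ κ ω ≤ K := by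
    filter_upwards [hGprob] with ω hω
    obtain ⟨h01, hsum⟩ := hω
    set t : ℝ := ‖G ω‖ ^ 2 with ht
    have hκval : κ ω = β * t / (2 + β * t) := by rw [hκ]
    have ht0 : 0 ≤ t := sq_nonneg _
    have ht1 : t ≤ 1 := by
      have h1 : t = ∑ i, (G ω i) ^ 2 := euclid_sq_norm (G ω)
      have h2 : ∑ i, (G ω i) ^ 2 ≤ ∑ i, G ω i := by
        refine Finset.sum_le_sum fun i _ => ?_
        have := h01 i
        nlinarith [this.1, this.2]
      rw [h1]; rw [hsum] at h2; exact h2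
    have hd : (0 : ℝ) < 2 + β * t := by nlinarith
    constructor
    · rw [hκval]; exact div_nonneg (by nlinarith) hd.le
    · rw [hκval, hK, div_le_div_iff₀ hd h2β]
      nlinarith
  -- measurability of P
  have hm : MeasurableSpace.comap x inferInstance ≤ ‹MeasurableSpace Ω› := hx.comap_le
  have hPmeas : ∀ c, Measurable (P c) := fun c => by
    rw [hP c]; exact (stronglyMeasurable_condExp.mono hm).measurable
  have hPbdd : ∀ c, ∀ᵐ ω ∂μ, |P c ω| ≤ 1 := fun c => by
    rw [hP c]
    have hb : ∀ᵐ ω ∂μ, |(fun ω => if y ω = c then (1 : ℝ) else 0) ω| ≤ ((1 : NNReal) : ℝ) :=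
      Filter.Eventually.of_forall fun ω => by by_cases h : y ω = c <;> simp [h]
    simpa using ae_bdd_condExp_of_ae_bdd (R := 1) hb
  -- integrability of D
  have hdmeas : ∀ c, Measurable fun ω => (P c ω - Φ c (x ω)) ^ 2 := fun c =>
    ((hPmeas c).sub ((hΦmeas c).comp hx)).pow_const 2
  have hdint : ∀ c, Integrable (fun ω => (P c ω - Φ c (x ω)) ^ 2) μ := fun c => by
    refine Integrable.mono' (integrable_const (4 : ℝ)) (hdmeas c).aestronglyMeasurable ?_
    filter_upwards [hPbdd c] with ω hω
    have h1 := (hΦ01 c (x ω)).1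
    have h2 := (hΦ01 c (x ω)).2
    rw [Real.norm_eq_abs, abs_of_nonneg (sq_nonneg _)]
    nlinarith [abs_le.1 hω]
  set D : Ω → ℝ := fun ω => ∑ c, (P c ω - Φ c (x ω)) ^ 2 with hD
  have hDint : Integrable D μ := integrable_finset_sum _ fun c _ => hdint c
  set C1 : ℝ := (1 + ρ) * (1 + K) ^ 2 * (∑ c, ‖w c‖ ^ 2) with hC1
  set C2 : ℝ := (1 + ρ⁻¹) * K ^ 2 with hC2
  have hC1nn : 0 ≤ C1 := by positivity
  set g : Ω → ℝ := fun ω => C1 * D ω + C2 * ‖ξ ω‖ ^ 2 with hg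
  have hgint : Integrable g μ := (hDint.const_mul C1).add (hξ2.const_mul C2)
  -- pointwise bound
  have hpt : ∀ᵐ ω ∂μ, ‖e ω‖ ^ 2 ≤ g ω := by
    filter_upwards [he, hκb] with ω hω hκω
    obtain ⟨hκ0, hκ1⟩ := hκω
    set S : Fin p → ℝ := fun j => ∑ c, (P c ω - Φ c (x ω)) * w c j with hS
    have hSnn : 0 ≤ ∑ j, (S j) ^ 2 := Finset.sum_nonneg fun j _ => sq_nonneg _
    have hξnn : 0 ≤ ∑ j, (ξ ω j) ^ 2 := Finset.sum_nonneg fun j _ => sq_nonneg _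
    have step1 : ‖e ω‖ ^ 2
        ≤ (1 + ρ) * (1 + κ ω) ^ 2 * (∑ j, (S j) ^ 2)
          + (1 + ρ⁻¹) * (κ ω) ^ 2 * (∑ j, (ξ ω j) ^ 2) := by
      rw [euclid_sq_norm (e ω), Finset.mul_sum, Finset.mul_sum, ← Finset.sum_add_distrib]
      refine Finset.sum_le_sum fun j _ => ?_
      rw [hω j]
      have := young_sq ρ ((1 + κ ω) * S j) (κ ω * ξ ω j) hρ
      calc ((1 + κ ω) * S j + κ ω * ξ ω j) ^ 2
          ≤ (1 + ρ) * ((1 + κ ω) * S j) ^ 2 + (1 + ρ⁻¹) * (κ ω * ξ ω j) ^ 2 := this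
        _ = (1 + ρ) * (1 + κ ω) ^ 2 * (S j) ^ 2 + (1 + ρ⁻¹) * (κ ω) ^ 2 * (ξ ω j) ^ 2 := by
            ring
    have hκsq : (1 + κ ω) ^ 2 ≤ (1 + K) ^ 2 := by nlinarith
    have hκsq2 : (κ ω) ^ 2 ≤ K ^ 2 := by nlinarith
    have step2 : ∑ j, (S j) ^ 2 ≤ (∑ c, ‖w c‖ ^ 2) * D ω := by
      have hCS : ∀ j, (S j) ^ 2 ≤ D ω * ∑ c, (w c j) ^ 2 := fun j =>
        Finset.sum_mul_sq_le_sq_mul_sq _ _ _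
      calc ∑ j, (S j) ^ 2 ≤ ∑ j, D ω * ∑ c, (w c j) ^ 2 :=
            Finset.sum_le_sum fun j _ => hCS j
        _ = D ω * ∑ j, ∑ c, (w c j) ^ 2 := by rw [Finset.mul_sum]
        _ = D ω * ∑ c, ∑ j, (w c j) ^ 2 := by rw [Finset.sum_comm]
        _ = (∑ c, ‖w c‖ ^ 2) * D ω := by
            rw [mul_comm]; congr 1
            exact Finset.sum_congr rfl fun c _ => (euclid_sq_norm (w c)).symm
    have hξeq : ∑ j, (ξ ω j) ^ 2 = ‖ξ ω‖ ^ 2 := (euclid_sq_norm (ξ ω)).symm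
    have hDnn : 0 ≤ D ω := Finset.sum_nonneg fun c _ => sq_nonneg _
    calc ‖e ω‖ ^ 2
        ≤ (1 + ρ) * (1 + κ ω) ^ 2 * (∑ j, (S j) ^ 2)
          + (1 + ρ⁻¹) * (κ ω) ^ 2 * (∑ j, (ξ ω j) ^ 2) := step1
      _ ≤ (1 + ρ) * (1 + K) ^ 2 * ((∑ c, ‖w c‖ ^ 2) * D ω)
          + (1 + ρ⁻¹) * K ^ 2 * ‖ξ ω‖ ^ 2 := by
          rw [← hξeq]
          have h1 : (1 + ρ) * (1 + κ ω) ^ 2 * (∑ j, (S j) ^ 2)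
              ≤ (1 + ρ) * (1 + K) ^ 2 * ((∑ c, ‖w c‖ ^ 2) * D ω) := by
            have hb : (1 + ρ) * (1 + κ ω) ^ 2 ≤ (1 + ρ) * (1 + K) ^ 2 := by nlinarith
            have := mul_le_mul hb step2 hSnn (by positivity)
            linarith
          have h2 : (1 + ρ⁻¹) * (κ ω) ^ 2 * (∑ j, (ξ ω j) ^ 2)
              ≤ (1 + ρ⁻¹) * K ^ 2 * (∑ j, (ξ ω j) ^ 2) := by
            have : (1 + ρ⁻¹) * (κ ω) ^ 2 ≤ (1 + ρ⁻¹) * K ^ 2 := by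
              have : (0:ℝ) < 1 + ρ⁻¹ := by positivity
              nlinarith
            exact mul_le_mul_of_nonneg_right this hξnn
          linarith
      _ = g ω := by rw [hg]; simp only [hC1, hC2]; ring
  -- e is a.e. equal to a measurable function
  set f : Ω → EuclideanSpace ℝ (Fin p) := fun ω =>
    WithLp.toLp 2 (fun j => (1 + κ ω) * (∑ c, (P c ω - Φ c (x ω)) * w c j) + κ ω * ξ ω j) with hf
  have hκmeas : Measurable κ := by
    rw [hκ]
    exact ((hG.norm.pow_const 2).const_mul β).div
      (((hG.norm.pow_const 2).const_mul β).const_add 2)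
  have hfmeas : Measurable f := by
    refine (WithLp.measurable_toLp 2 _).comp ?_
    apply measurable_pi_lambda
    intro j
    refine Measurable.add ?_ (hκmeas.mul ((measurable_pi_apply j).comp ((WithLp.measurable_ofLp 2 _).comp hξ)))
    refine (hκmeas.const_add 1).mul ?_
    exact Finset.measurable_sum _ fun c _ =>
      ((hPmeas c).sub ((hΦmeas c).comp hx)).mul measurable_const
  have hef : e =ᵐ[μ] f := by
    filter_upwards [he] with ω hω
    ext j; exact hω j
  have hemeas : AEStronglyMeasurable (fun ω => ‖e ω‖ ^ 2) μ := by
    refine (hfmeas.norm.pow_const 2).aestronglyMeasurable.congr ?_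
    filter_upwards [hef] with ω hω
    rw [hω]
  have heint : Integrable (fun ω => ‖e ω‖ ^ 2) μ := by
    refine Integrable.mono' hgint hemeas ?_
    filter_upwards [hpt] with ω hω
    rwa [Real.norm_eq_abs, abs_of_nonneg (sq_nonneg _)]
  have hmain : ∫ ω, ‖e ω‖ ^ 2 ∂μ ≤ ∫ ω, g ω ∂μ := integral_mono_ae heint hgint hpt
  have hgval : ∫ ω, g ω ∂μ = C1 * ∫ ω, D ω ∂μ + C2 * ∫ ω, ‖ξ ω‖ ^ 2 ∂μ := by
    rw [hg]
    rw [integral_add (hDint.const_mul C1) (hξ2.const_mul C2),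
      integral_const_mul, integral_const_mul]
  have hDval : ∫ ω, D ω ∂μ = ∑ c, ∫ ω, (P c ω - Φ c (x ω)) ^ 2 ∂μ :=
    integral_finset_sum _ fun c _ => hdint c
  have hDle : ∫ ω, D ω ∂μ ≤ (1 + η) * (∑ c, A c) + (1 + η⁻¹) * (∑ c, E c) := by
    rw [hDval, Finset.mul_sum, Finset.mul_sum, ← Finset.sum_add_distrib]
    refine Finset.sum_le_sum fun c _ => ?_
    have heq : ∀ ω, (P c ω - Φ c (x ω)) ^ 2 = |Φ c (x ω) - P c ω| ^ 2 := fun ω => by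
      rw [sq_abs]; ring
    calc ∫ ω, (P c ω - Φ c (x ω)) ^ 2 ∂μ
        = ∫ ω, |Φ c (x ω) - P c ω| ^ 2 ∂μ := by simp_rw [heq]
      _ ≤ (1 + η) * A c + (1 + η⁻¹) * E c := happrox c
  have hfinal : C1 * ∫ ω, D ω ∂μ
      ≤ C1 * ((1 + η) * (∑ c, A c) + (1 + η⁻¹) * (∑ c, E c)) :=
    mul_le_mul_of_nonneg_left hDle hC1nn
  calc ∫ ω, ‖e ω‖ ^ 2 ∂μ ≤ C1 * ∫ ω, D ω ∂μ + C2 * ∫ ω, ‖ξ ω‖ ^ 2 ∂μ := by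
        rw [← hgval]; exact hmain
    _ ≤ C1 * ((1 + η) * (∑ c, A c) + (1 + η⁻¹) * (∑ c, E c))
        + C2 * ∫ ω, ‖ξ ω‖ ^ 2 ∂μ := by linarith
    _ = (1 + ρ) * (1 + η) * (1 + K) ^ 2 * (∑ c, ‖w c‖ ^ 2) * (∑ c, A c)
        + (1 + ρ) * (1 + η⁻¹) * (1 + K) ^ 2 * (∑ c, ‖w c‖ ^ 2) * (∑ c, E c)
        + (1 + ρ⁻¹) * K ^ 2 * ∫ ω, ‖ξ ω‖ ^ 2 ∂μ := by
        rw [hC1, hC2]; ring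
end
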